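/- Let a and b be positive integers with a ≠ b. There exists a 2-edge-coloring χ of the complete graph on the positive integers such that for all positive integers w > x and y > z with a·(w − x) = b·(y − z), the pairs {w, x} and {y, z} receive different colors under χ. -/

import Mathlib

/-- For positive integers `a ≠ b` there is a 2-edge-coloring of the complete graph on the
positive integers such that whenever `w > x ≥ 1`, `y > z ≥ 1` and `a·(w − x) = b·(y − z)`,
the pairs `{w, x}` and `{y, z}` receive different colors. -/
theorem no_monochromatic_scaled_differences (a b : ℕ) (ha : 0 < a) (hb : 0 < b)
    (hab : a ≠ b) :
    ∃ χ : Sym2 ℕ → Fin 2,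
      ∀ w x y z : ℕ, 0 < x → x < w → 0 < z → z < y →
        a * (w - x) = b * (y - z) → χ s(w, x) ≠ χ s(y, z) := by
  -- pick a prime p where the valuations of a and b differ
  obtain ⟨p, hp, hv⟩ : ∃ p : ℕ, p.Prime ∧ padicValNat p a ≠ padicValNat p b := by
    by_contra h
    push_neg at h
    exact hab ((Nat.eq_iff_prime_padicValNat_eq a b ha.ne' hb.ne').2 h)
  haveI : Fact p.Prime := ⟨hp⟩
  set va := padicValNat p a with hva
  set vb := padicValNat p b with hvb
  set e := max va vb - min va vb with he
  have he0 : 0 < e := by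
    rcases Nat.lt_or_ge va vb with h | h
    · simp [he]; omega
    · simp [he]; omega
  refine ⟨Sym2.lift ⟨fun u v => ⟨(padicValNat p (max u v - min u v) / e) % 2, by omega⟩,
    fun u v => by simp only [max_comm u v, min_comm u v]⟩, ?_⟩
  intro w x y z hx hxw hz hzy heq
  have hd1 : 0 < w - x := by omega
  have hd2 : 0 < y - z := by omega
  set d1 := w - x
  set d2 := y - z
  have hval : va + padicValNat p d1 = vb + padicValNat p d2 := by
    have h1 : padicValNat p (a * d1) = va + padicValNat p d1 :=
      padicValNat.mul ha.ne' hd1.ne'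
    have h2 : padicValNat p (b * d2) = vb + padicValNat p d2 :=
      padicValNat.mul hb.ne' hd2.ne'
    rw [← h1, ← h2, heq]
  set v1 := padicValNat p d1
  set v2 := padicValNat p d2
  have hkey : (v1 / e) % 2 ≠ (v2 / e) % 2 := by
    rcases Nat.lt_or_ge va vb with h | h
    · have h1 : v1 = v2 + e := by simp only [he]; omega
      rw [h1, Nat.add_div_right _ he0]
      omega
    · have h1 : v2 = v1 + e := by simp only [he]; omega
      rw [h1, Nat.add_div_right _ he0]
      omega
  simp only [Sym2.lift_mk]
  have hmw : max w x - min w x = d1 := by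
    rw [Nat.max_eq_left hxw.le, Nat.min_eq_right hxw.le]
  have hmy : max y z - min y z = d2 := by
    rw [Nat.max_eq_left hzy.le, Nat.min_eq_right hzy.le]
  simp only [hmw, hmy]
  intro hcon
  exact hkey (congrArg Fin.val hcon)
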